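/- (Theorem 3: optimality condition for nuclear-norm regularized least squares.) Let λ > 0 and let B_* be a minimizer over B ∈ ℝ^{m×n} of (1/2)·Σ_{(i,j)∈Ω}(B_{ij} − A_{ij})² + λ‖B‖_*, the sum counted with multiplicity of Ω. Then λ·⟨B_* − A_r, UVᵀ⟩ + λ·‖P_{T⊥}(B_*)‖_* ≤ ⟨R_Ω(B_* − A), A_r − B_*⟩. -/

import Mathlib

open scoped BigOperators
open Matrix
open MeasureTheory

namespace MC

variable {m n r s : ℕ}

/-- Trace inner product `⟨X,Y⟩ = trace(Xᵀ Y)`. -/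
def ip (A B : Matrix (Fin m) (Fin n) ℝ) : ℝ := ∑ i, ∑ j, A i j * B i j

/-- Frobenius norm. -/
noncomputable def fro (A : Matrix (Fin m) (Fin n) ℝ) : ℝ := Real.sqrt (ip A A)

/-- Largest absolute value of an entry. -/
noncomputable def infNorm (A : Matrix (Fin m) (Fin n) ℝ) : ℝ := ⨆ i, ⨆ j, |A i j|

/-- Nuclear norm: sum of singular values. -/
noncomputable def nuclearNorm (A : Matrix (Fin m) (Fin n) ℝ) : ℝ :=
  ∑ j, Real.sqrt ((show (Aᵀ * A).IsHermitian by
    rw [← Matrix.conjTranspose_eq_transpose_of_trivial]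
    exact Matrix.isHermitian_conjTranspose_mul_self A).eigenvalues j)

/-- Spectral norm: largest singular value. -/
noncomputable def specNorm (A : Matrix (Fin m) (Fin n) ℝ) : ℝ :=
  ⨆ j, Real.sqrt ((show (Aᵀ * A).IsHermitian by
    rw [← Matrix.conjTranspose_eq_transpose_of_trivial]
    exact Matrix.isHermitian_conjTranspose_mul_self A).eigenvalues j)

/-- Sampling operator for a multiset of index pairs. -/
def RΩ (Ω : Multiset (Fin m × Fin n)) (Z : Matrix (Fin m) (Fin n) ℝ) :
    Matrix (Fin m) (Fin n) ℝ :=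
  Matrix.of fun i j => (Ω.count (i, j)) * Z i j

def PT (U : Matrix (Fin m) (Fin r) ℝ) (V : Matrix (Fin n) (Fin r) ℝ)
    (Z : Matrix (Fin m) (Fin n) ℝ) : Matrix (Fin m) (Fin n) ℝ :=
  U * Uᵀ * Z + Z * (V * Vᵀ) - U * Uᵀ * Z * (V * Vᵀ)

def PTperp (U : Matrix (Fin m) (Fin r) ℝ) (V : Matrix (Fin n) (Fin r) ℝ)
    (Z : Matrix (Fin m) (Fin n) ℝ) : Matrix (Fin m) (Fin n) ℝ :=
  (1 - U * Uᵀ) * Z * (1 - V * Vᵀ)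

/-- Objective of nuclear-norm regularized least squares. -/
noncomputable def obj (Ω : Multiset (Fin m × Fin n)) (A : Matrix (Fin m) (Fin n) ℝ)
    (lam : ℝ) (B : Matrix (Fin m) (Fin n) ℝ) : ℝ :=
  (1 / 2) * (Ω.map fun p => (B p.1 p.2 - A p.1 p.2) ^ 2).sum + lam * nuclearNorm B

/-- Uniform probability measure on index pairs. -/
noncomputable def unifPair (m n : ℕ) : Measure (Fin m × Fin n) :=
  (Fintype.card (Fin m × Fin n) : ENNReal)⁻¹ • Measure.count

/-- Law of `s` i.i.d. uniform index pairs. -/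
noncomputable def sampleMeasure (m n s : ℕ) : Measure (Fin s → Fin m × Fin n) :=
  Measure.pi fun _ => unifPair m n

/-- The multiset of sampled indices. -/
def toMS (ω : Fin s → Fin m × Fin n) : Multiset (Fin m × Fin n) :=
  Multiset.map ω Finset.univ.val


lemma dot_sum_right {k : ℕ} {ι : Type*} (S : Finset ι) (x : Fin k → ℝ) (f : ι → Fin k → ℝ) :
    x ⬝ᵥ (∑ j ∈ S, f j) = ∑ j ∈ S, x ⬝ᵥ f j := by
  simp only [dotProduct, Finset.sum_apply, Finset.mul_sum]
  exact Finset.sum_comm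

lemma dot_sum_left {k : ℕ} {ι : Type*} (S : Finset ι) (x : Fin k → ℝ) (f : ι → Fin k → ℝ) :
    (∑ j ∈ S, f j) ⬝ᵥ x = ∑ j ∈ S, f j ⬝ᵥ x := by
  rw [dotProduct_comm, dot_sum_right]
  exact Finset.sum_congr rfl fun j _ => dotProduct_comm _ _

lemma ip_vecMulVec_left (p : Fin m → ℝ) (q : Fin n → ℝ) (X : Matrix (Fin m) (Fin n) ℝ) :
    ip (Matrix.vecMulVec p q) X = p ⬝ᵥ (X *ᵥ q) := by
  simp only [ip, vecMulVec, dotProduct, mulVec, Matrix.of_apply, Finset.mul_sum]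
  exact Finset.sum_congr rfl fun i _ => Finset.sum_congr rfl fun j _ => by ring

lemma ip_add_left (Y Z X : Matrix (Fin m) (Fin n) ℝ) : ip (Y + Z) X = ip Y X + ip Z X := by
  simp only [ip, Matrix.add_apply, add_mul, Finset.sum_add_distrib]

lemma ip_zero_left (X : Matrix (Fin m) (Fin n) ℝ) : ip 0 X = 0 := by simp [ip]

lemma ip_zero_right (X : Matrix (Fin m) (Fin n) ℝ) : ip X 0 = 0 := by simp [ip]

lemma ip_sum_left {ι : Type*} (S : Finset ι) (f : ι → Matrix (Fin m) (Fin n) ℝ)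
    (X : Matrix (Fin m) (Fin n) ℝ) : ip (∑ j ∈ S, f j) X = ∑ j ∈ S, ip (f j) X := by
  classical
  induction S using Finset.induction_on with
  | empty => simp [ip_zero_left]
  | insert _ _ h ih => rw [Finset.sum_insert h, Finset.sum_insert h, ip_add_left, ih]

lemma ip_smul_left (c : ℝ) (Y X : Matrix (Fin m) (Fin n) ℝ) : ip (c • Y) X = c * ip Y X := by
  simp only [ip, Matrix.smul_apply, smul_eq_mul, Finset.mul_sum]
  exact Finset.sum_congr rfl fun i _ => Finset.sum_congr rfl fun j _ => by ring

lemma ip_add_right (Z X Y : Matrix (Fin m) (Fin n) ℝ) : ip Z (X + Y) = ip Z X + ip Z Y := by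
  simp only [ip, Matrix.add_apply, mul_add, Finset.sum_add_distrib]

lemma ip_smul_right (c : ℝ) (Z X : Matrix (Fin m) (Fin n) ℝ) : ip Z (c • X) = c * ip Z X := by
  simp only [ip, Matrix.smul_apply, smul_eq_mul, Finset.mul_sum]
  exact Finset.sum_congr rfl fun i _ => Finset.sum_congr rfl fun j _ => by ring

lemma ip_sub_right (Z X Y : Matrix (Fin m) (Fin n) ℝ) : ip Z (X - Y) = ip Z X - ip Z Y := by
  simp only [ip, Matrix.sub_apply, mul_sub, Finset.sum_sub_distrib]

lemma ip_sum_right {ι : Type*} (S : Finset ι) (Z : Matrix (Fin m) (Fin n) ℝ)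
    (f : ι → Matrix (Fin m) (Fin n) ℝ) : ip Z (∑ j ∈ S, f j) = ∑ j ∈ S, ip Z (f j) := by
  classical
  induction S using Finset.induction_on with
  | empty => simp [ip_zero_right]
  | insert _ _ h ih => rw [Finset.sum_insert h, Finset.sum_insert h, ip_add_right, ih]

lemma bessel {k : ℕ} {ι : Type*} [DecidableEq ι] (S : Finset ι) (p : ι → Fin k → ℝ)
    (h : ∀ j ∈ S, ∀ j' ∈ S, p j ⬝ᵥ p j' = if j = j' then 1 else 0) (x : Fin k → ℝ) :
    ∑ j ∈ S, (p j ⬝ᵥ x) ^ 2 ≤ x ⬝ᵥ x := by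
  set y : Fin k → ℝ := ∑ j ∈ S, (p j ⬝ᵥ x) • p j with hy
  have h0 : (0:ℝ) ≤ (x - y) ⬝ᵥ (x - y) := Finset.sum_nonneg fun i _ => mul_self_nonneg _
  have hxy : x ⬝ᵥ y = ∑ j ∈ S, (p j ⬝ᵥ x) ^ 2 := by
    rw [hy, dot_sum_right]
    refine Finset.sum_congr rfl fun j hj => ?_
    rw [dotProduct_smul, smul_eq_mul, dotProduct_comm]; ring
  have hyx : y ⬝ᵥ x = ∑ j ∈ S, (p j ⬝ᵥ x) ^ 2 := by
    rw [dotProduct_comm]; exact hxy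
  have hyy : y ⬝ᵥ y = ∑ j ∈ S, (p j ⬝ᵥ x) ^ 2 := by
    rw [hy, dot_sum_left]
    refine Finset.sum_congr rfl fun j hj => ?_
    rw [smul_dotProduct, smul_eq_mul, dot_sum_right]
    rw [Finset.sum_eq_single j]
    · rw [dotProduct_smul, smul_eq_mul, h j hj j hj, if_pos rfl]; ring
    · intro j' hj' hne
      rw [dotProduct_smul, smul_eq_mul, h j hj j' hj', if_neg (fun hh => hne hh.symm), mul_zero]
    · intro hj'; exact absurd hj hj'
  have hexp : (x - y) ⬝ᵥ (x - y) = x ⬝ᵥ x - ∑ j ∈ S, (p j ⬝ᵥ x) ^ 2 := by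
    rw [sub_dotProduct, dotProduct_sub, dotProduct_sub, hxy, hyx, hyy]
    ring
  linarith [hexp ▸ h0]

lemma cs_bound {k l : ℕ} {ι : Type*} [DecidableEq ι] (S : Finset ι)
    (p : ι → Fin k → ℝ) (q : ι → Fin l → ℝ)
    (hp : ∀ j ∈ S, ∀ j' ∈ S, p j ⬝ᵥ p j' = if j = j' then 1 else 0)
    (hq : ∀ j ∈ S, ∀ j' ∈ S, q j ⬝ᵥ q j' = if j = j' then 1 else 0)
    (a : Fin k → ℝ) (b : Fin l → ℝ) (ha : a ⬝ᵥ a ≤ 1) (hb : b ⬝ᵥ b ≤ 1) :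
    ∑ j ∈ S, (p j ⬝ᵥ a) * (q j ⬝ᵥ b) ≤ 1 := by
  have h1 : (∑ j ∈ S, (p j ⬝ᵥ a) * (q j ⬝ᵥ b)) ^ 2
      ≤ (∑ j ∈ S, (p j ⬝ᵥ a) ^ 2) * ∑ j ∈ S, (q j ⬝ᵥ b) ^ 2 :=
    Finset.sum_mul_sq_le_sq_mul_sq S _ _
  have h2 := bessel S p hp a
  have h3 := bessel S q hq b
  have h4 : (0:ℝ) ≤ ∑ j ∈ S, (p j ⬝ᵥ a) ^ 2 := Finset.sum_nonneg fun j _ => sq_nonneg _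
  have h5 : (0:ℝ) ≤ ∑ j ∈ S, (q j ⬝ᵥ b) ^ 2 := Finset.sum_nonneg fun j _ => sq_nonneg _
  have h6 : (0:ℝ) ≤ a ⬝ᵥ a := le_trans h4 h2
  nlinarith

variable {m n : ℕ}


lemma dot_self_nonneg {k : ℕ} (x : Fin k → ℝ) : 0 ≤ x ⬝ᵥ x :=
  Finset.sum_nonneg fun i _ => mul_self_nonneg _

lemma dot_self_eq_zero {k : ℕ} {x : Fin k → ℝ} (h : x ⬝ᵥ x = 0) : x = 0 := by
  funext i
  have := (Finset.sum_eq_zero_iff_of_nonneg (fun i _ => mul_self_nonneg (x i))).1 h i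
    (Finset.mem_univ i)
  simpa [mul_self_eq_zero] using this

lemma svd (X : Matrix (Fin m) (Fin n) ℝ) :
    ∃ (σ : Fin n → ℝ) (p : Fin n → Fin m → ℝ) (q : Fin n → Fin n → ℝ),
      (∀ j, 0 ≤ σ j) ∧ (nuclearNorm X = ∑ j, σ j) ∧
      (∀ j j', q j ⬝ᵥ q j' = if j = j' then 1 else 0) ∧
      (∀ j j', σ j ≠ 0 → σ j' ≠ 0 → p j ⬝ᵥ p j' = if j = j' then 1 else 0) ∧
      (∀ j, p j ⬝ᵥ p j ≤ 1) ∧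
      (∀ j, σ j • p j = X *ᵥ q j) ∧
      (∀ j, σ j • q j = Xᵀ *ᵥ p j) ∧
      (X = ∑ j, σ j • Matrix.vecMulVec (p j) (q j)) := by
  classical
  set hX : (Xᵀ * X).IsHermitian := (show (Xᵀ * X).IsHermitian by
    rw [← Matrix.conjTranspose_eq_transpose_of_trivial]
    exact Matrix.isHermitian_conjTranspose_mul_self X) with hhX
  set lam : Fin n → ℝ := hX.eigenvalues with hlam
  set b := hX.eigenvectorBasis with hb
  set q : Fin n → Fin n → ℝ := fun j => ⇑(b j) with hq
  have hEig : ∀ j, (Xᵀ * X) *ᵥ q j = lam j • q j := fun j => hX.mulVec_eigenvectorBasis j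
  have horth : ∀ j j', q j ⬝ᵥ q j' = if j = j' then 1 else 0 := by
    intro j j'
    have := orthonormal_iff_ite.1 b.orthonormal j j'
    simpa [PiLp.inner_apply, RCLike.inner_apply, conj_trivial, dotProduct, mul_comm] using this
  have hdotq : ∀ j, (X *ᵥ q j) ⬝ᵥ (X *ᵥ q j) = lam j := by
    intro j
    have h1 : q j ⬝ᵥ ((Xᵀ * X) *ᵥ q j) = (X *ᵥ q j) ⬝ᵥ (X *ᵥ q j) := by
      rw [← mulVec_mulVec, dotProduct_mulVec, vecMul_transpose]
    rw [← h1, hEig j, dotProduct_smul, smul_eq_mul, horth j j, if_pos rfl, mul_one]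
  have hlam0 : ∀ j, 0 ≤ lam j := fun j => (hdotq j) ▸ dot_self_nonneg _
  set σ : Fin n → ℝ := fun j => Real.sqrt (lam j) with hσ
  have hσ0 : ∀ j, 0 ≤ σ j := fun j => Real.sqrt_nonneg _
  have hσsq : ∀ j, σ j * σ j = lam j := fun j => Real.mul_self_sqrt (hlam0 j)
  have hXq0 : ∀ j, σ j = 0 → X *ᵥ q j = 0 := by
    intro j h
    have : lam j = 0 := by rw [← hσsq j, h, mul_zero]
    exact dot_self_eq_zero (by rw [hdotq j, this])
  set p : Fin n → Fin m → ℝ := fun j => (σ j)⁻¹ • (X *ᵥ q j) with hp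
  have h7 : ∀ j, σ j • p j = X *ᵥ q j := by
    intro j
    by_cases h : σ j = 0
    · rw [h, zero_smul, hXq0 j h]
    · rw [hp]; simp only; rw [smul_smul, mul_inv_cancel₀ h, one_smul]
  have hqq' : ∀ j j', (X *ᵥ q j) ⬝ᵥ (X *ᵥ q j') = if j = j' then lam j else 0 := by
    intro j j'
    have h1 : q j ⬝ᵥ ((Xᵀ * X) *ᵥ q j') = (X *ᵥ q j) ⬝ᵥ (X *ᵥ q j') := by
      rw [← mulVec_mulVec, dotProduct_mulVec, vecMul_transpose]
    rw [← h1, hEig j', dotProduct_smul, smul_eq_mul, horth j j']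
    by_cases h : j = j'
    · subst h; simp
    · simp [h]
  have hpdot : ∀ j j', σ j ≠ 0 → σ j' ≠ 0 → p j ⬝ᵥ p j' = if j = j' then 1 else 0 := by
    intro j j' h h'
    rw [hp]; simp only
    rw [smul_dotProduct, dotProduct_smul, smul_eq_mul, smul_eq_mul, hqq' j j']
    by_cases he : j = j'
    · subst he; rw [if_pos rfl, if_pos rfl, ← hσsq j]
      field_simp
    · simp [he]
  have hplen : ∀ j, p j ⬝ᵥ p j ≤ 1 := by
    intro j
    by_cases h : σ j = 0
    · rw [hp]; simp only [hXq0 j h, smul_zero, dotProduct_zero]; norm_num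
    · rw [hpdot j j h h, if_pos rfl]
  have h8 : ∀ j, σ j • q j = Xᵀ *ᵥ p j := by
    intro j
    by_cases h : σ j = 0
    · rw [h, zero_smul, hp]; simp only [hXq0 j h, smul_zero, mulVec_zero]
    · rw [hp]; simp only
      rw [mulVec_smul, mulVec_mulVec, hEig j, smul_smul]
      have : (σ j)⁻¹ * lam j = σ j := by rw [← hσsq j]; field_simp
      rw [this]
  have hdecomp : X = ∑ j, σ j • Matrix.vecMulVec (p j) (q j) := by
    have hterm : ∀ j, σ j • Matrix.vecMulVec (p j) (q j)
        = Matrix.vecMulVec (X *ᵥ q j) (q j) := by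
      intro j
      rw [← h7 j]
      ext i l
      simp only [Matrix.vecMulVec, Matrix.smul_apply, Matrix.of_apply, Pi.smul_apply,
        smul_eq_mul]
      ring
    set Q : Matrix (Fin n) (Fin n) ℝ := Matrix.of fun l j => q j l with hQ
    have hQtQ : Qᵀ * Q = 1 := by
      ext j j'
      simp only [Matrix.mul_apply, Matrix.transpose_apply, Matrix.of_apply, Matrix.one_apply, hQ]
      rw [← horth j j']
      rfl
    have hQQt : Q * Qᵀ = 1 := mul_eq_one_comm.mp hQtQ
    have hXQQ : X = X * Q * Qᵀ := by rw [Matrix.mul_assoc, hQQt, Matrix.mul_one]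
    ext i l
    rw [Matrix.sum_apply]
    simp only [hterm]
    simp only [Matrix.vecMulVec, Matrix.of_apply]
    conv_lhs => rw [hXQQ]
    simp only [Matrix.mul_apply, Matrix.transpose_apply, Matrix.of_apply, hQ, mulVec, dotProduct,
      Finset.sum_mul]
  exact ⟨σ, p, q, hσ0, rfl, horth, hpdot, hplen, h7, h8, hdecomp⟩


lemma ip_vmv_vmv (p a : Fin m → ℝ) (q b : Fin n → ℝ) :
    ip (Matrix.vecMulVec p q) (Matrix.vecMulVec a b) = (p ⬝ᵥ a) * (q ⬝ᵥ b) := by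
  simp only [ip, Matrix.vecMulVec, Matrix.of_apply, dotProduct, Finset.sum_mul_sum]
  exact Finset.sum_congr rfl fun i _ => Finset.sum_congr rfl fun j _ => by ring

lemma ip_le_sum {ι κ : Type*} [DecidableEq ι] (S : Finset ι)
    (p : ι → Fin m → ℝ) (q : ι → Fin n → ℝ)
    (hp : ∀ j ∈ S, ∀ j' ∈ S, p j ⬝ᵥ p j' = if j = j' then 1 else 0)
    (hq : ∀ j ∈ S, ∀ j' ∈ S, q j ⬝ᵥ q j' = if j = j' then 1 else 0)
    (K : Finset κ) (c : κ → ℝ) (a : κ → Fin m → ℝ) (b : κ → Fin n → ℝ)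
    (hc : ∀ k ∈ K, 0 ≤ c k) (ha : ∀ k ∈ K, a k ⬝ᵥ a k ≤ 1) (hb : ∀ k ∈ K, b k ⬝ᵥ b k ≤ 1) :
    ip (∑ j ∈ S, Matrix.vecMulVec (p j) (q j)) (∑ k ∈ K, c k • Matrix.vecMulVec (a k) (b k))
      ≤ ∑ k ∈ K, c k := by
  rw [ip_sum_right]
  have hterm : ∀ k ∈ K, ip (∑ j ∈ S, Matrix.vecMulVec (p j) (q j))
      (c k • Matrix.vecMulVec (a k) (b k)) ≤ c k := by
    intro k hk
    rw [ip_smul_right]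
    have h1 : ip (∑ j ∈ S, Matrix.vecMulVec (p j) (q j)) (Matrix.vecMulVec (a k) (b k)) ≤ 1 := by
      rw [ip_sum_left]
      calc ∑ j ∈ S, ip (Matrix.vecMulVec (p j) (q j)) (Matrix.vecMulVec (a k) (b k))
          = ∑ j ∈ S, (p j ⬝ᵥ a k) * (q j ⬝ᵥ b k) :=
            Finset.sum_congr rfl fun j _ => ip_vmv_vmv _ _ _ _
        _ ≤ 1 := cs_bound S p q hp hq (a k) (b k) (ha k hk) (hb k hk)
    calc c k * ip (∑ j ∈ S, Matrix.vecMulVec (p j) (q j)) (Matrix.vecMulVec (a k) (b k))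
        ≤ c k * 1 := mul_le_mul_of_nonneg_left h1 (hc k hk)
      _ = c k := mul_one _
  exact Finset.sum_le_sum hterm

lemma ip_ortho_le_nuclear {ι : Type*} [DecidableEq ι] (S : Finset ι)
    (p : ι → Fin m → ℝ) (q : ι → Fin n → ℝ)
    (hp : ∀ j ∈ S, ∀ j' ∈ S, p j ⬝ᵥ p j' = if j = j' then 1 else 0)
    (hq : ∀ j ∈ S, ∀ j' ∈ S, q j ⬝ᵥ q j' = if j = j' then 1 else 0)
    (X : Matrix (Fin m) (Fin n) ℝ) :
    ip (∑ j ∈ S, Matrix.vecMulVec (p j) (q j)) X ≤ nuclearNorm X := by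
  obtain ⟨σ, a, b, hσ0, hnn, hborth, haorth, halen, h7, h8, hdec⟩ := svd X
  rw [hnn]
  conv_lhs => rw [hdec]
  exact ip_le_sum S p q hp hq Finset.univ σ a b (fun k _ => hσ0 k) (fun k _ => halen k)
    (fun k _ => le_of_eq (by rw [hborth k k, if_pos rfl]))

lemma nuclear_eq_ip (X : Matrix (Fin m) (Fin n) ℝ) :
    ∃ (S : Finset (Fin n)) (p : Fin n → Fin m → ℝ) (q : Fin n → Fin n → ℝ),
      (∀ j ∈ S, ∀ j' ∈ S, p j ⬝ᵥ p j' = if j = j' then 1 else 0) ∧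
      (∀ j ∈ S, ∀ j' ∈ S, q j ⬝ᵥ q j' = if j = j' then 1 else 0) ∧
      nuclearNorm X = ip (∑ j ∈ S, Matrix.vecMulVec (p j) (q j)) X := by
  classical
  obtain ⟨σ, p, q, hσ0, hnn, hqorth, hporth, hplen, h7, h8, hdec⟩ := svd X
  refine ⟨Finset.univ.filter (fun j => σ j ≠ 0), p, q, ?_, ?_, ?_⟩
  · intro j hj j' hj'
    exact hporth j j' (Finset.mem_filter.1 hj).2 (Finset.mem_filter.1 hj').2
  · intro j _ j' _
    exact hqorth j j'
  · rw [ip_sum_left, hnn]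
    have hterm : ∀ j ∈ Finset.univ.filter (fun j => σ j ≠ 0),
        ip (Matrix.vecMulVec (p j) (q j)) X = σ j := by
      intro j hj
      have hj' := (Finset.mem_filter.1 hj).2
      rw [ip_vecMulVec_left, ← h7 j, dotProduct_smul, smul_eq_mul,
        hporth j j hj' hj', if_pos rfl, mul_one]
    rw [Finset.sum_congr rfl hterm, Finset.sum_filter_ne_zero]

lemma nuclearNorm_nonneg (X : Matrix (Fin m) (Fin n) ℝ) : 0 ≤ nuclearNorm X := by
  unfold nuclearNorm; exact Finset.sum_nonneg fun j _ => Real.sqrt_nonneg _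

lemma nuclearNorm_add_le (X Y : Matrix (Fin m) (Fin n) ℝ) :
    nuclearNorm (X + Y) ≤ nuclearNorm X + nuclearNorm Y := by
  obtain ⟨S, p, q, hp, hq, heq⟩ := nuclear_eq_ip (X + Y)
  rw [heq, ip_add_right]
  exact add_le_add (ip_ortho_le_nuclear S p q hp hq X) (ip_ortho_le_nuclear S p q hp hq Y)

lemma nuclearNorm_smul (t : ℝ) (ht : 0 ≤ t) (X : Matrix (Fin m) (Fin n) ℝ) :
    nuclearNorm (t • X) = t * nuclearNorm X := by
  apply le_antisymm
  · obtain ⟨S, p, q, hp, hq, heq⟩ := nuclear_eq_ip (t • X)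
    rw [heq, ip_smul_right]
    exact mul_le_mul_of_nonneg_left (ip_ortho_le_nuclear S p q hp hq X) ht
  · obtain ⟨S, p, q, hp, hq, heq⟩ := nuclear_eq_ip X
    rw [heq, ← ip_smul_right]
    exact ip_ortho_le_nuclear S p q hp hq (t • X)



lemma ip_comm (X Y : Matrix (Fin m) (Fin n) ℝ) : ip X Y = ip Y X := by
  simp only [ip]
  exact Finset.sum_congr rfl fun i _ => Finset.sum_congr rfl fun j _ => mul_comm _ _

lemma dot_mulVec_eq {k l : ℕ} (a : Fin k → ℝ) (N : Matrix (Fin k) (Fin l) ℝ) (y : Fin l → ℝ) :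
    a ⬝ᵥ (N *ᵥ y) = (Nᵀ *ᵥ a) ⬝ᵥ y := by
  rw [dotProduct_mulVec]
  congr 1
  rw [← vecMul_transpose, transpose_transpose]

lemma subgrad {m n r : ℕ} (hrm : r ≤ m)
    (σ : Fin m → ℝ) (u : Fin m → Fin m → ℝ) (v : Fin m → Fin n → ℝ)
    (hσ0 : ∀ i, 0 ≤ σ i)
    (hu : ∀ i i' : Fin m, ∑ k, u i k * u i' k = if i = i' then 1 else 0)
    (hv : ∀ i i' : Fin m, ∑ k, v i k * v i' k = if i = i' then 1 else 0)
    (Ar : Matrix (Fin m) (Fin n) ℝ)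
    (hAr : Ar = ∑ i ∈ Finset.univ.filter (fun i : Fin m => (i : ℕ) < r),
        σ i • Matrix.vecMulVec (u i) (v i))
    (U : Matrix (Fin m) (Fin r) ℝ) (hU : ∀ i k, U i k = u (Fin.castLE hrm k) i)
    (V : Matrix (Fin n) (Fin r) ℝ) (hV : ∀ j k, V j k = v (Fin.castLE hrm k) j)
    (B : Matrix (Fin m) (Fin n) ℝ) :
    ip (B - Ar) (U * Vᵀ) + nuclearNorm (PTperp U V B)
      ≤ nuclearNorm B - nuclearNorm Ar := by
  classical
  -- dot-product forms of orthonormality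
  have hu' : ∀ i i' : Fin m, u i ⬝ᵥ u i' = if i = i' then 1 else 0 := fun i i' => hu i i'
  have hv' : ∀ i i' : Fin m, v i ⬝ᵥ v i' = if i = i' then 1 else 0 := fun i i' => hv i i'
  set Pu : Matrix (Fin m) (Fin m) ℝ := U * Uᵀ with hPu
  set Pv : Matrix (Fin n) (Fin n) ℝ := V * Vᵀ with hPv
  set M : Matrix (Fin m) (Fin n) ℝ := (1 - Pu) * B * (1 - Pv) with hM
  have hMptp : PTperp U V B = M := rfl
  have hUtU : Uᵀ * U = 1 := by
    ext k k'
    simp only [Matrix.mul_apply, Matrix.transpose_apply, Matrix.one_apply, hU]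
    rw [hu (Fin.castLE hrm k) (Fin.castLE hrm k')]
    simp [Fin.castLE_inj]
  have hVtV : Vᵀ * V = 1 := by
    ext k k'
    simp only [Matrix.mul_apply, Matrix.transpose_apply, Matrix.one_apply, hV]
    rw [hv (Fin.castLE hrm k) (Fin.castLE hrm k')]
    simp [Fin.castLE_inj]
  have hPuPu : Pu * Pu = Pu := by
    rw [hPu, Matrix.mul_assoc, ← Matrix.mul_assoc Uᵀ U Uᵀ, hUtU, Matrix.one_mul]
  have hPvPv : Pv * Pv = Pv := by
    rw [hPv, Matrix.mul_assoc, ← Matrix.mul_assoc Vᵀ V Vᵀ, hVtV, Matrix.one_mul]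
  have hPut : Puᵀ = Pu := by rw [hPu, Matrix.transpose_mul, Matrix.transpose_transpose]
  have hPvt : Pvᵀ = Pv := by rw [hPv, Matrix.transpose_mul, Matrix.transpose_transpose]
  have ePu : Pu * (1 - Pu) = 0 := by
    rw [Matrix.mul_sub, Matrix.mul_one, hPuPu, sub_self]
  have ePv : (1 - Pv) * Pv = 0 := by
    rw [Matrix.sub_mul, Matrix.one_mul, hPvPv, sub_self]
  have hPuM : Pu * M = 0 := by
    rw [hM, ← Matrix.mul_assoc, ← Matrix.mul_assoc, ePu, Matrix.zero_mul, Matrix.zero_mul]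
  have hMPv : M * Pv = 0 := by
    rw [hM, Matrix.mul_assoc, ePv, Matrix.mul_zero]
  have hMt : Mᵀ = (1 - Pv) * Bᵀ * (1 - Pu) := by
    rw [hM, Matrix.transpose_mul, Matrix.transpose_mul, Matrix.transpose_sub,
      Matrix.transpose_sub, Matrix.transpose_one, hPut, hPvt, ← Matrix.mul_assoc,
      Matrix.transpose_one]
  have hPvMt : Pv * Mᵀ = 0 := by
    have h2 : (M * Pv)ᵀ = Pv * Mᵀ := by rw [Matrix.transpose_mul, hPvt]
    rw [← h2, hMPv, Matrix.transpose_zero]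
  -- svd of M
  obtain ⟨τ, pM, qM, hτ0, hMnn, hqMorth, hpMorth, hpMlen, h7M, h8M, hMdec⟩ := svd M
  set SM : Finset (Fin n) := Finset.univ.filter (fun j => τ j ≠ 0) with hSM
  have hSMmem : ∀ j : Fin n, j ∈ SM ↔ τ j ≠ 0 := by
    intro j; rw [hSM, Finset.mem_filter]; simp
  -- p's of svd of M are orthogonal to range of Pu, q's to range of Pv
  have hPupM : ∀ j, τ j ≠ 0 → Pu *ᵥ pM j = 0 := by
    intro j hj
    have h1 : Pu *ᵥ (τ j • pM j) = 0 := by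
      rw [h7M j, mulVec_mulVec, hPuM, Matrix.zero_mulVec]
    rw [mulVec_smul] at h1
    exact (smul_eq_zero.1 h1).resolve_left hj
  have hPvqM : ∀ j, τ j ≠ 0 → Pv *ᵥ qM j = 0 := by
    intro j hj
    have h1 : Pv *ᵥ (τ j • qM j) = 0 := by
      rw [h8M j, mulVec_mulVec, hPvMt, Matrix.zero_mulVec]
    rw [mulVec_smul] at h1
    exact (smul_eq_zero.1 h1).resolve_left hj
  -- Pu fixes the top singular vectors
  have hudot : ∀ k : Fin r, Pu *ᵥ u (Fin.castLE hrm k) = u (Fin.castLE hrm k) := by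
    intro k
    rw [hPu, ← mulVec_mulVec]
    have h1 : Uᵀ *ᵥ u (Fin.castLE hrm k) = Pi.single k 1 := by
      funext c
      simp only [mulVec, dotProduct, Matrix.transpose_apply, hU]
      rw [hu (Fin.castLE hrm c) (Fin.castLE hrm k)]
      simp [Fin.castLE_inj, Pi.single_apply]
    rw [h1, mulVec_single]
    funext i; simp [hU]
  have hvdot : ∀ k : Fin r, Pv *ᵥ v (Fin.castLE hrm k) = v (Fin.castLE hrm k) := by
    intro k
    rw [hPv, ← mulVec_mulVec]
    have h1 : Vᵀ *ᵥ v (Fin.castLE hrm k) = Pi.single k 1 := by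
      funext c
      simp only [mulVec, dotProduct, Matrix.transpose_apply, hV]
      rw [hv (Fin.castLE hrm c) (Fin.castLE hrm k)]
      simp [Fin.castLE_inj, Pi.single_apply]
    rw [h1, mulVec_single]
    funext i; simp [hV]
  -- M kills top singular vectors
  have hMtu : ∀ k : Fin r, Mᵀ *ᵥ u (Fin.castLE hrm k) = 0 := by
    intro k
    rw [hMt, ← mulVec_mulVec]
    have : (1 - Pu) *ᵥ u (Fin.castLE hrm k) = 0 := by
      rw [Matrix.sub_mulVec, Matrix.one_mulVec, hudot k, sub_self]
    rw [this, Matrix.mulVec_zero]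
  have hMv : ∀ k : Fin r, M *ᵥ v (Fin.castLE hrm k) = 0 := by
    intro k
    rw [hM, ← mulVec_mulVec]
    have : (1 - Pv) *ᵥ v (Fin.castLE hrm k) = 0 := by
      rw [Matrix.sub_mulVec, Matrix.one_mulVec, hvdot k, sub_self]
    rw [this, Matrix.mulVec_zero]
  -- cross orthogonality
  have hcross_u : ∀ (k : Fin r) (j : Fin n), τ j ≠ 0 → u (Fin.castLE hrm k) ⬝ᵥ pM j = 0 := by
    intro k j hj
    have h1 : τ j • (u (Fin.castLE hrm k) ⬝ᵥ pM j) = 0 := by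
      rw [← dotProduct_smul, h7M j, dot_mulVec_eq, hMtu k, zero_dotProduct]
    exact (smul_eq_zero.1 h1).resolve_left hj
  have hcross_v : ∀ (k : Fin r) (j : Fin n), τ j ≠ 0 → v (Fin.castLE hrm k) ⬝ᵥ qM j = 0 := by
    intro k j hj
    have h1 : τ j • (v (Fin.castLE hrm k) ⬝ᵥ qM j) = 0 := by
      rw [← dotProduct_smul, h8M j, dot_mulVec_eq, transpose_transpose]
      rw [hMv k, zero_dotProduct]
    exact (smul_eq_zero.1 h1).resolve_left hj
  -- the two pieces of the dual certificate
  set Zl : Matrix (Fin m) (Fin n) ℝ :=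
    ∑ k : Fin r, Matrix.vecMulVec (u (Fin.castLE hrm k)) (v (Fin.castLE hrm k)) with hZl
  set W : Matrix (Fin m) (Fin n) ℝ := ∑ j ∈ SM, Matrix.vecMulVec (pM j) (qM j) with hW
  have hUV : U * Vᵀ = Zl := by
    ext i j0
    rw [hZl, Matrix.sum_apply]
    simp [Matrix.mul_apply, Matrix.vecMulVec, hU, hV]
  -- Ar as a sum over Fin r
  have hArr : Ar = ∑ k : Fin r,
      σ (Fin.castLE hrm k) • Matrix.vecMulVec (u (Fin.castLE hrm k)) (v (Fin.castLE hrm k)) := by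
    rw [hAr]
    refine Finset.sum_bij' (fun i hi => (⟨(i : ℕ), by
        simpa using (Finset.mem_filter.1 hi).2⟩ : Fin r))
      (fun k _ => Fin.castLE hrm k) ?_ ?_ ?_ ?_ ?_
    · intro i hi; exact Finset.mem_univ _
    · intro k _
      refine Finset.mem_filter.2 ⟨Finset.mem_univ _, ?_⟩
      simpa using k.isLt
    · intro i hi
      apply Fin.ext
      simp
    · intro k _
      apply Fin.ext
      simp
    · intro i hi
      have hcast : Fin.castLE hrm (⟨(i : ℕ), by
          simpa using (Finset.mem_filter.1 hi).2⟩ : Fin r) = i := by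
        apply Fin.ext; simp
      rw [hcast]
  -- combined orthonormal family: ip (Zl + W) B ≤ nuclearNorm B
  have hZlW : ip (Zl + W) B ≤ nuclearNorm B := by
    have := ip_ortho_le_nuclear (Finset.univ.disjSum SM)
      (Sum.elim (fun k : Fin r => u (Fin.castLE hrm k)) pM)
      (Sum.elim (fun k : Fin r => v (Fin.castLE hrm k)) qM) ?_ ?_ B
    · rw [Finset.sum_disjSum] at this
      simpa using this
    · rintro (k | j) hj (k' | j') hj'
      · rw [Sum.elim_inl, Sum.elim_inl, hu']
        simp [Fin.castLE_inj]
      · have hj'' : τ j' ≠ 0 := (hSMmem j').1 (Finset.inr_mem_disjSum.1 hj')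
        rw [Sum.elim_inl, Sum.elim_inr, hcross_u k j' hj'']
        simp
      · have hj'' : τ j ≠ 0 := (hSMmem j).1 (Finset.inr_mem_disjSum.1 hj)
        rw [Sum.elim_inr, Sum.elim_inl, dotProduct_comm, hcross_u k' j hj'']
        simp
      · have h1 : τ j ≠ 0 := (hSMmem j).1 (Finset.inr_mem_disjSum.1 hj)
        have h2 : τ j' ≠ 0 := (hSMmem j').1 (Finset.inr_mem_disjSum.1 hj')
        rw [Sum.elim_inr, Sum.elim_inr, hpMorth j j' h1 h2]
        simp
    · rintro (k | j) hj (k' | j') hj'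
      · rw [Sum.elim_inl, Sum.elim_inl, hv']
        simp [Fin.castLE_inj]
      · have hj'' : τ j' ≠ 0 := (hSMmem j').1 (Finset.inr_mem_disjSum.1 hj')
        rw [Sum.elim_inl, Sum.elim_inr, hcross_v k j' hj'']
        simp
      · have hj'' : τ j ≠ 0 := (hSMmem j).1 (Finset.inr_mem_disjSum.1 hj)
        rw [Sum.elim_inr, Sum.elim_inl, dotProduct_comm, hcross_v k' j hj'']
        simp
      · have h1 : τ j ≠ 0 := (hSMmem j).1 (Finset.inr_mem_disjSum.1 hj)
        have h2 : τ j' ≠ 0 := (hSMmem j').1 (Finset.inr_mem_disjSum.1 hj')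
        rw [Sum.elim_inr, Sum.elim_inr, hqMorth j j']
        simp
  -- ip W B = nuclearNorm M
  have hWB : ip W B = nuclearNorm M := by
    rw [hW, ip_sum_left]
    have hterm : ∀ j ∈ SM, ip (Matrix.vecMulVec (pM j) (qM j)) B = τ j := by
      intro j hj
      have hjne : τ j ≠ 0 := (hSMmem j).1 hj
      rw [ip_vecMulVec_left]
      have hBq : pM j ⬝ᵥ (B *ᵥ qM j) = pM j ⬝ᵥ (M *ᵥ qM j) := by
        have h0 : (1 - Pv) *ᵥ qM j = qM j := by
          rw [Matrix.sub_mulVec, Matrix.one_mulVec, hPvqM j hjne, sub_zero]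
        have h1 : M *ᵥ qM j = (1 - Pu) *ᵥ (B *ᵥ qM j) := by
          rw [hM, ← mulVec_mulVec, ← mulVec_mulVec, h0]
        have h2 : (1 - Pu)ᵀ *ᵥ pM j = pM j := by
          rw [Matrix.transpose_sub, Matrix.transpose_one, hPut, Matrix.sub_mulVec,
            Matrix.one_mulVec, hPupM j hjne, sub_zero]
        rw [h1]
        conv_rhs => rw [dot_mulVec_eq, h2]
      rw [hBq, ← h7M j, dotProduct_smul, smul_eq_mul, hpMorth j j hjne hjne, if_pos rfl,
        mul_one]
    rw [Finset.sum_congr rfl hterm, hSM, Finset.sum_filter_ne_zero, hMnn]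
  -- ip Zl Ar = sum of top singular values
  have hZlAr : ip Zl Ar = ∑ k : Fin r, σ (Fin.castLE hrm k) := by
    rw [hZl, ip_sum_left]
    refine Finset.sum_congr rfl fun k _ => ?_
    conv_lhs => rw [hArr]
    rw [ip_sum_right]
    rw [Finset.sum_eq_single k]
    · rw [ip_smul_right, ip_vmv_vmv, hu', hv']; simp
    · intro k' _ hne
      rw [ip_smul_right, ip_vmv_vmv, hu', hv']
      rw [if_neg (fun h => hne (Fin.castLE_inj.1 h).symm)]
      ring
    · intro h; exact absurd (Finset.mem_univ k) h
  -- ip W Ar = 0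
  have hWAr : ip W Ar = 0 := by
    rw [hW, ip_sum_left]
    refine Finset.sum_eq_zero fun j hj => ?_
    have hjne : τ j ≠ 0 := (hSMmem j).1 hj
    conv_lhs => rw [hArr]
    rw [ip_sum_right]
    refine Finset.sum_eq_zero fun k _ => ?_
    rw [ip_smul_right, ip_vmv_vmv, dotProduct_comm (qM j), hcross_v k j hjne]
    ring
  -- nuclearNorm Ar ≤ sum of top singular values
  have hnnAr : nuclearNorm Ar ≤ ∑ k : Fin r, σ (Fin.castLE hrm k) := by
    obtain ⟨S, pp, qq, hpp, hqq, heq⟩ := nuclear_eq_ip Ar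
    rw [heq]
    conv_lhs => rw [hArr]
    refine ip_le_sum S pp qq hpp hqq Finset.univ (fun k => σ (Fin.castLE hrm k))
      (fun k => u (Fin.castLE hrm k)) (fun k => v (Fin.castLE hrm k))
      (fun k _ => hσ0 _) (fun k _ => ?_) (fun k _ => ?_)
    · rw [hu', if_pos rfl]
    · rw [hv', if_pos rfl]
  -- assemble
  have hsplit : ip Zl B + ip W B ≤ nuclearNorm B := by
    rw [← ip_add_left]
    exact hZlW
  rw [hMptp, hUV, ip_comm, ip_sub_right]
  linarith [hsplit, hWB, hZlAr, hWAr, hnnAr]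



lemma msum_eq_ip (Ω : Multiset (Fin m × Fin n)) (C D : Matrix (Fin m) (Fin n) ℝ) :
    (Ω.map fun p => C p.1 p.2 * D p.1 p.2).sum = ip (RΩ Ω C) D := by
  classical
  rw [Finset.sum_multiset_map_count]
  have h1 : ip (RΩ Ω C) D = ∑ p : Fin m × Fin n, (Ω.count p : ℝ) * (C p.1 p.2 * D p.1 p.2) := by
    rw [ip, Fintype.sum_prod_type]
    refine Finset.sum_congr rfl fun i _ => Finset.sum_congr rfl fun j _ => ?_
    simp [RΩ]
    ring
  rw [h1]
  rw [← Finset.sum_subset (Finset.subset_univ Ω.toFinset) (fun p _ hp => ?_)]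
  · refine Finset.sum_congr rfl fun p hp => ?_
    rw [nsmul_eq_mul]
  · rw [Multiset.count_eq_zero.2 (fun h => hp (Multiset.mem_toFinset.2 h))]
    simp

lemma msum_sq_nonneg (Ω : Multiset (Fin m × Fin n)) (f : Fin m × Fin n → ℝ) :
    0 ≤ (Ω.map fun p => f p ^ 2).sum :=
  Multiset.sum_nonneg fun x hx => by
    obtain ⟨p, _, rfl⟩ := Multiset.mem_map.1 hx
    exact sq_nonneg _

/-- Theorem 3: optimality condition for nuclear-norm regularized
least squares.  If `B_*` minimizes
`(1/2)·Σ_{(i,j)∈Ω}(B_{ij} − A_{ij})² + λ‖B‖_*` then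
`λ⟨B_* − A_r, UVᵀ⟩ + λ‖P_{T⊥}(B_*)‖_* ≤ ⟨R_Ω(B_* − A), A_r − B_*⟩`. -/
theorem stmt2 (m n r : ℕ) (hm : 0 < m) (hmn : m ≤ n) (hr1 : 1 ≤ r) (hrm : r ≤ m)
    -- singular value decomposition of `A`
    (σ : Fin m → ℝ) (u : Fin m → Fin m → ℝ) (v : Fin m → Fin n → ℝ)
    (hσdec : ∀ i j : Fin m, i ≤ j → σ j ≤ σ i)
    (hσ0 : ∀ i, 0 ≤ σ i)
    (hu : ∀ i i' : Fin m, ∑ k, u i k * u i' k = if i = i' then 1 else 0)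
    (hv : ∀ i i' : Fin m, ∑ k, v i k * v i' k = if i = i' then 1 else 0)
    (A : Matrix (Fin m) (Fin n) ℝ)
    (hA : A = ∑ i, σ i • Matrix.vecMulVec (u i) (v i))
    (hσr : 0 < σ ⟨r - 1, by omega⟩)
    -- the best rank-`r` approximation of `A`
    (Ar : Matrix (Fin m) (Fin n) ℝ)
    (hAr : Ar = ∑ i ∈ Finset.univ.filter (fun i : Fin m => (i : ℕ) < r),
        σ i • Matrix.vecMulVec (u i) (v i))
    -- the matrices of the top `r` left/right singular vectors
    (U : Matrix (Fin m) (Fin r) ℝ) (hU : ∀ i k, U i k = u (Fin.castLE hrm k) i)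
    (V : Matrix (Fin n) (Fin r) ℝ) (hV : ∀ j k, V j k = v (Fin.castLE hrm k) j)
    -- the regularized least-squares problem and its minimizer
    (Ω : Multiset (Fin m × Fin n)) (lam : ℝ) (hlam : 0 < lam)
    (Bstar : Matrix (Fin m) (Fin n) ℝ)
    (hmin : ∀ B : Matrix (Fin m) (Fin n) ℝ, obj Ω A lam Bstar ≤ obj Ω A lam B) :
    lam * ip (Bstar - Ar) (U * Vᵀ) + lam * nuclearNorm (PTperp U V Bstar)
      ≤ ip (RΩ Ω (Bstar - A)) (Ar - Bstar) := by
  classical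
  set Δ : Matrix (Fin m) (Fin n) ℝ := Ar - Bstar with hΔ
  set L : ℝ := ip (RΩ Ω (Bstar - A)) Δ with hL
  set Cq : ℝ := (Ω.map fun p => Δ p.1 p.2 ^ 2).sum with hCq
  have hCq0 : 0 ≤ Cq := msum_sq_nonneg Ω _
  -- first-order condition
  have key1 : ∀ t : ℝ, 0 < t → t ≤ 1 →
      0 ≤ L + t * Cq / 2 + lam * (nuclearNorm Ar - nuclearNorm Bstar) := by
    intro t ht0 ht1
    have hobj := hmin (Bstar + t • Δ)
    have hquad : (Ω.map fun p => ((Bstar + t • Δ) p.1 p.2 - A p.1 p.2) ^ 2).sum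
        = (Ω.map fun p => (Bstar p.1 p.2 - A p.1 p.2) ^ 2).sum + 2 * t * L + t ^ 2 * Cq := by
      have hpt : ∀ p : Fin m × Fin n, ((Bstar + t • Δ) p.1 p.2 - A p.1 p.2) ^ 2
          = (Bstar p.1 p.2 - A p.1 p.2) ^ 2
            + (2 * t) * ((Bstar p.1 p.2 - A p.1 p.2) * Δ p.1 p.2) + t ^ 2 * Δ p.1 p.2 ^ 2 := by
        intro p
        simp only [Matrix.add_apply, Matrix.smul_apply, smul_eq_mul]
        ring
      rw [Multiset.map_congr rfl (fun p _ => hpt p), Multiset.sum_map_add,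
        Multiset.sum_map_add, Multiset.sum_map_mul_left, Multiset.sum_map_mul_left]
      have hsub : (Ω.map fun p => (Bstar p.1 p.2 - A p.1 p.2) * Δ p.1 p.2).sum = L := by
        rw [hL, ← msum_eq_ip Ω (Bstar - A) Δ]
        exact congrArg _ (Multiset.map_congr rfl fun p _ => by rw [Matrix.sub_apply])
      rw [hsub, ← hCq]
    have hnuc : nuclearNorm (Bstar + t • Δ)
        ≤ (1 - t) * nuclearNorm Bstar + t * nuclearNorm Ar := by
      have hcomb : Bstar + t • Δ = (1 - t) • Bstar + t • Ar := by
        rw [hΔ]; module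
      rw [hcomb]
      calc nuclearNorm ((1 - t) • Bstar + t • Ar)
          ≤ nuclearNorm ((1 - t) • Bstar) + nuclearNorm (t • Ar) := nuclearNorm_add_le _ _
        _ = (1 - t) * nuclearNorm Bstar + t * nuclearNorm Ar := by
            rw [nuclearNorm_smul _ (by linarith), nuclearNorm_smul _ ht0.le]
    rw [obj, obj, hquad] at hobj
    nlinarith [hobj, hnuc, hlam]
  have part1 : lam * (nuclearNorm Bstar - nuclearNorm Ar) ≤ L := by
    by_contra hg
    push_neg at hg
    have hgneg : L + lam * (nuclearNorm Ar - nuclearNorm Bstar) < 0 := by linarith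
    by_cases hC : Cq = 0
    · have h1 := key1 1 one_pos le_rfl
      rw [hC] at h1
      linarith
    · have hCpos : 0 < Cq := lt_of_le_of_ne hCq0 (Ne.symm hC)
      set g : ℝ := L + lam * (nuclearNorm Ar - nuclearNorm Bstar) with hgd
      set t : ℝ := min 1 (-g / Cq) with htd
      have ht0 : 0 < t := lt_min one_pos (div_pos (neg_pos.2 hgneg) hCpos)
      have ht1 : t ≤ 1 := min_le_left _ _
      have h2 : t * Cq ≤ -g := by
        calc t * Cq ≤ (-g / Cq) * Cq :=
              mul_le_mul_of_nonneg_right (min_le_right _ _) hCq0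
          _ = -g := div_mul_cancel₀ _ hC
      have h3 := key1 t ht0 ht1
      linarith
  have part2 := subgrad hrm σ u v hσ0 hu hv Ar hAr U hU V hV Bstar
  have hlam' : lam * (ip (Bstar - Ar) (U * Vᵀ) + nuclearNorm (PTperp U V Bstar))
      ≤ lam * (nuclearNorm Bstar - nuclearNorm Ar) :=
    mul_le_mul_of_nonneg_left part2 hlam.le
  calc lam * ip (Bstar - Ar) (U * Vᵀ) + lam * nuclearNorm (PTperp U V Bstar)
      = lam * (ip (Bstar - Ar) (U * Vᵀ) + nuclearNorm (PTperp U V Bstar)) := by ring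
    _ ≤ lam * (nuclearNorm Bstar - nuclearNorm Ar) := hlam'
    _ ≤ L := part1
    _ = ip (RΩ Ω (Bstar - A)) (Ar - Bstar) := by rw [hL, hΔ]


end MC
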